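/- Let H be a finite-dimensional complex inner product space, let ψ and φ be unit vectors in H that are linearly independent, and let p, q > 0. Then the self-adjoint operator Δ := p|ψ⟩⟨ψ| − q|φ⟩⟨φ| admits a decomposition Δ = λ₊|u⟩⟨u| + λ₋|v⟩⟨v| where u and v are orthonormal vectors in H and λ₊ > 0 > λ₋; i.e., Δ has rank two with exactly one positive and one negative eigenvalue. -/

import Mathlib

open Matrix
open scoped ComplexOrder Kronecker

/-- The trace norm `‖Y‖₁ = Tr √(Yᴴ Y)` of a complex matrix. -/
noncomputable def traceNorm {m : Type*} [Fintype m] [DecidableEq m]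
    (Y : Matrix m m ℂ) : ℝ :=
  ((Matrix.posSemidef_conjTranspose_mul_self Y).1.eigenvectorUnitary.1 *
    diagonal (((↑) : ℝ → ℂ) ∘ (Real.sqrt ·) ∘ (Matrix.posSemidef_conjTranspose_mul_self Y).1.eigenvalues) *
    (star (Matrix.posSemidef_conjTranspose_mul_self Y).1.eigenvectorUnitary : Matrix m m ℂ)).trace.re

/-- The inner product `⟪x, y⟫ = ∑ i, conj (x i) * y i` on `m → ℂ`. -/
noncomputable def cinner {m : Type*} [Fintype m] (x y : m → ℂ) : ℂ := star x ⬝ᵥ y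

/-- An orthogonal projection: a self-adjoint idempotent matrix. -/
def IsOrthoProj {m : Type*} [Fintype m] (P : Matrix m m ℂ) : Prop :=
  P.IsHermitian ∧ P * P = P

/-- An effect: an operator `S` with `0 ≤ S ≤ 1`. -/
def IsEffect {m : Type*} [Fintype m] [DecidableEq m] (S : Matrix m m ℂ) : Prop :=
  S.PosSemidef ∧ (1 - S).PosSemidef

/-- The rank-one operator `|ψ⟩⟨ψ|`. -/
noncomputable def outer {m : Type*} (ψ : m → ℂ) : Matrix m m ℂ :=
  Matrix.vecMulVec ψ (star ψ)

section helpers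
variable {m : Type*} [Fintype m]

lemma cinner_add_right (x y z : m → ℂ) : cinner x (y + z) = cinner x y + cinner x z := by
  simp [cinner, dotProduct_add]

lemma cinner_sub_right (x y z : m → ℂ) : cinner x (y - z) = cinner x y - cinner x z := by
  simp [cinner, dotProduct_sub]

lemma cinner_smul_right (a : ℂ) (x y : m → ℂ) : cinner x (a • y) = a * cinner x y := by
  simp [cinner]

lemma cinner_add_left (x y z : m → ℂ) : cinner (x + y) z = cinner x z + cinner y z := by
  simp [cinner, add_dotProduct]

lemma cinner_sub_left (x y z : m → ℂ) : cinner (x - y) z = cinner x z - cinner y z := by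
  simp [cinner, sub_dotProduct]

lemma cinner_smul_left (a : ℂ) (x y : m → ℂ) :
    cinner (a • x) y = (starRingEnd ℂ) a * cinner x y := by
  simp [cinner, star_smul, smul_dotProduct]

lemma cinner_conj (x y : m → ℂ) : cinner y x = (starRingEnd ℂ) (cinner x y) := by
  simp [cinner, dotProduct, map_sum, mul_comm]

end helpers


set_option maxHeartbeats 1000000

/-- **Spectral decomposition of the Helstrom operator.** For linearly independent unit
vectors `ψ, φ` and `p, q > 0`, the operator `Δ = p|ψ⟩⟨ψ| − q|φ⟩⟨φ|` decomposes as
`λ₊|u⟩⟨u| + λ₋|v⟩⟨v|` with `u, v` orthonormal and `λ₊ > 0 > λ₋`. -/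
theorem helstrom_operator_spectral_decomposition
    {n : ℕ} (ψ φ : Fin n → ℂ) (hψ : cinner ψ ψ = 1) (hφ : cinner φ φ = 1)
    (hind : LinearIndependent ℂ ![ψ, φ])
    (p q : ℝ) (hp : 0 < p) (hq : 0 < q) :
    ∃ (u v : Fin n → ℂ) (lp lm : ℝ),
      cinner u u = 1 ∧ cinner v v = 1 ∧ cinner u v = 0 ∧ 0 < lp ∧ lm < 0 ∧
      (p : ℂ) • outer ψ - (q : ℂ) • outer φ = (lp : ℂ) • outer u + (lm : ℂ) • outer v := by
  classical
  set c : ℂ := cinner ψ φ with hc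
  clear_value c
  set w : Fin n → ℂ := φ - c • ψ with hwdef
  clear_value w
  have hψw : cinner ψ w = 0 := by
    rw [hwdef, cinner_sub_right, cinner_smul_right, hψ, mul_one, ← hc, sub_self]
  have hwψ : cinner w ψ = 0 := by rw [cinner_conj ψ w, hψw]; simp
  have hφψ : cinner φ ψ = (starRingEnd ℂ) c := by rw [hc, ← cinner_conj]
  have hww : cinner w w = ((1 - Complex.normSq c : ℝ) : ℂ) := by
    rw [hwdef, cinner_sub_left, cinner_sub_right, cinner_sub_right, cinner_smul_right,
      cinner_smul_right, cinner_smul_left, cinner_smul_left, hψ, hφ, hφψ, ← hc]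
    push_cast
    rw [← Complex.mul_conj]
    ring
  -- w ≠ 0
  have hwne : w ≠ 0 := by
    intro h0
    rw [linearIndependent_fin2] at hind
    have hφc : φ = c • ψ := by
      have := sub_eq_zero.mp (by simpa [hwdef] using h0)
      simpa using this
    have hφne : (![ψ, φ] : Fin 2 → Fin n → ℂ) 1 ≠ 0 := hind.1
    simp only [Matrix.cons_val_one, Matrix.head_cons] at hφne
    have hcne : c ≠ 0 := by
      intro hc0; rw [hc0, zero_smul] at hφc; exact hφne hφc
    have h2 := hind.2 c⁻¹
    simp only [Matrix.cons_val_one, Matrix.head_cons, Matrix.cons_val_zero] at h2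
    exact h2 (by rw [hφc, smul_smul, inv_mul_cancel₀ hcne, one_smul])
  -- positivity
  have hwwre : cinner w w = ((∑ i, Complex.normSq (w i) : ℝ) : ℂ) := by
    simp only [cinner, dotProduct, Pi.star_apply, Complex.ofReal_sum]
    refine Finset.sum_congr rfl fun i _ => ?_
    rw [Complex.normSq_eq_conj_mul_self]; rfl
  have hpos : 0 < 1 - Complex.normSq c := by
    have h1 : (0:ℝ) < ∑ i, Complex.normSq (w i) := by
      obtain ⟨i, hi⟩ := Function.ne_iff.mp hwne
      refine Finset.sum_pos' (fun j _ => Complex.normSq_nonneg _) ⟨i, Finset.mem_univ i, ?_⟩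
      simpa [Complex.normSq_pos] using hi
    have := hwwre.symm.trans hww
    have h2 : (∑ i, Complex.normSq (w i)) = 1 - Complex.normSq c := by exact_mod_cast this
    linarith
  set s : ℝ := Real.sqrt (1 - Complex.normSq c) with hsdef
  clear_value s
  have hspos : 0 < s := by rw [hsdef]; exact Real.sqrt_pos.mpr hpos
  have hs2 : s ^ 2 = 1 - Complex.normSq c := by rw [hsdef]; exact Real.sq_sqrt hpos.le
  have hsne : (s : ℂ) ≠ 0 := by exact_mod_cast hspos.ne'
  set e : Fin n → ℂ := ((s : ℂ))⁻¹ • w with hedef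
  clear_value e
  have hee : cinner e e = 1 := by
    rw [hedef, cinner_smul_left, cinner_smul_right, hww, ← hs2]
    rw [map_inv₀, Complex.conj_ofReal]
    push_cast
    field_simp
  have hψe : cinner ψ e = 0 := by rw [hedef, cinner_smul_right, hψw, mul_zero]
  have heψ : cinner e ψ = 0 := by rw [hedef, cinner_smul_left, hwψ, mul_zero]
  have hφeq : φ = c • ψ + (s : ℂ) • e := by
    rw [hedef, smul_smul, mul_inv_cancel₀ hsne, one_smul, hwdef]
    abel
  -- scalar setup
  set nc : ℝ := Complex.normSq c with hncdef
  clear_value nc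
  have hnc0 : 0 ≤ nc := by rw [hncdef]; exact Complex.normSq_nonneg c
  set a : ℝ := p - q * nc with hadef
  clear_value a
  set dd : ℝ := -(q * s ^ 2) with hdddef
  clear_value dd
  set nb : ℝ := nc * q ^ 2 * s ^ 2 with hnbdef
  clear_value nb
  have hnb0 : 0 ≤ nb := by rw [hnbdef]; positivity
  have hdisc : 0 < (a - dd) ^ 2 + 4 * nb := by
    rcases eq_or_lt_of_le hnc0 with h | h
    · have hnb : nb = 0 := by rw [hnbdef, ← h]; ring
      have : a - dd = p + q * s ^ 2 := by rw [hadef, hdddef, ← h]; ring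
      rw [hnb, this]; nlinarith [sq_nonneg s, hspos, mul_pos hq (pow_pos hspos 2)]
    · have hnb : 0 < nb := by
        rw [hnbdef]; exact mul_pos (mul_pos h (pow_pos hq 2)) (pow_pos hspos 2)
      nlinarith [sq_nonneg (a - dd)]
  set D : ℝ := Real.sqrt ((a - dd) ^ 2 + 4 * nb) with hDdef
  clear_value D
  have hDpos : 0 < D := by rw [hDdef]; exact Real.sqrt_pos.mpr hdisc
  have hD2 : D ^ 2 = (a - dd) ^ 2 + 4 * nb := by rw [hDdef]; exact Real.sq_sqrt hdisc.le
  set lp : ℝ := ((a + dd) + D) / 2 with hlpdef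
  clear_value lp
  set lm : ℝ := ((a + dd) - D) / 2 with hlmdef
  clear_value lm
  set K : ℝ := lp - dd with hKdef
  clear_value K
  have hchar : (lp - a) * (lp - dd) = nb := by
    rw [hlpdef]; linear_combination hD2 / 4
  have hnb' : nb = (lp - a) * (lp - dd) := hchar.symm
  have hprod : lp * lm = a * dd - nb := by
    rw [hlpdef, hlmdef]; linear_combination -hD2 / 4
  have hprodneg : lp * lm < 0 := by
    rw [hprod, hadef, hdddef, hnbdef]
    have h9 : (p - q * nc) * -(q * s ^ 2) - nc * q ^ 2 * s ^ 2 = -(p * q * s ^ 2) := by ring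
    rw [h9]
    linarith [mul_pos hp (mul_pos hq (pow_pos hspos 2))]
  have hdiff : lp - lm = D := by rw [hlpdef, hlmdef]; ring
  have hlppos : 0 < lp := by nlinarith [hprodneg, hdiff, hDpos]
  have hlmneg : lm < 0 := by nlinarith [hprodneg, hlppos]
  have hKpos : 0 < K := by
    rcases eq_or_lt_of_le hnc0 with h | h
    · have hnb : nb = 0 := by rw [hnbdef, ← h]; ring
      have had : a - dd = p + q * s ^ 2 := by rw [hadef, hdddef, ← h]; ring
      have hD' : D ^ 2 = (a - dd) ^ 2 := by rw [hD2, hnb]; ring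
      rw [hKdef, hlpdef]
      nlinarith [mul_pos hq (pow_pos hspos 2)]
    · have hnb : 0 < nb := by
        rw [hnbdef]; exact mul_pos (mul_pos h (pow_pos hq 2)) (pow_pos hspos 2)
      rw [hKdef, hlpdef]
      nlinarith [sq_nonneg (a - dd + D), hD2, hDpos, hnb]
  have hKD : K ^ 2 + nb = K * D := by rw [hnb', hKdef, hlpdef]; ring
  have hI1 : lp * K ^ 2 + lm * nb = a * (K * D) := by
    rw [hnb', hKdef, hlpdef, hlmdef]; ring
  have hI4 : lp * nb + lm * K ^ 2 = dd * (K * D) := by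
    rw [hnb', hKdef, hlpdef, hlmdef]; ring
  have hKDpos : 0 < K * D := mul_pos hKpos hDpos
  set r : ℝ := Real.sqrt (K * D) with hrdef
  clear_value r
  have hrpos : 0 < r := by rw [hrdef]; exact Real.sqrt_pos.mpr hKDpos
  have hr2 : r ^ 2 = K * D := by rw [hrdef]; exact Real.sq_sqrt hKDpos.le
  have hrne : (r : ℂ) ≠ 0 := by exact_mod_cast hrpos.ne'
  set b : ℂ := -((q : ℂ) * c * (s : ℂ)) with hbdef
  clear_value b
  have hbb : b * (starRingEnd ℂ) b = ((nb : ℝ) : ℂ) := by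
    rw [Complex.mul_conj]
    norm_cast
    rw [hbdef, hnbdef, hncdef]
    simp [Complex.normSq_mul, Complex.normSq_ofReal]
    ring
  set u : Fin n → ℂ := ((r : ℂ))⁻¹ • ((K : ℂ) • ψ + ((starRingEnd ℂ) b) • e) with hudef
  clear_value u
  set v : Fin n → ℂ := ((r : ℂ))⁻¹ • (b • ψ - (K : ℂ) • e) with hvdef
  clear_value v
  have hKD' : ((K : ℂ)) ^ 2 + b * (starRingEnd ℂ) b = (K : ℂ) * (D : ℂ) := by
    rw [hbb]; exact_mod_cast congrArg (Complex.ofReal) hKD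
  have hr2C : ((r : ℂ)) ^ 2 = (K : ℂ) * (D : ℂ) := by exact_mod_cast congrArg Complex.ofReal hr2
  refine ⟨u, v, lp, lm, ?_, ?_, ?_, hlppos, hlmneg, ?_⟩
  · rw [hudef]
    simp only [cinner_smul_left, cinner_smul_right, cinner_add_left, cinner_add_right,
      hψ, hee, hψe, heψ, map_inv₀, Complex.conj_ofReal, Complex.conj_conj,
      mul_one, mul_zero, add_zero, zero_add]
    field_simp
    linear_combination hKD' - hr2C
  · rw [hvdef]
    simp only [cinner_smul_left, cinner_smul_right, cinner_sub_left, cinner_sub_right,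
      hψ, hee, hψe, heψ, map_inv₀, Complex.conj_ofReal, Complex.conj_conj,
      mul_one, mul_zero, sub_zero, zero_sub, map_neg]
    field_simp
    linear_combination (starRingEnd ℂ b) * b - hr2C + hKD'
  · rw [hudef, hvdef]
    simp only [cinner_smul_left, cinner_smul_right, cinner_sub_left, cinner_sub_right,
      cinner_add_left, cinner_add_right,
      hψ, hee, hψe, heψ, map_inv₀, Complex.conj_ofReal, Complex.conj_conj,
      mul_one, mul_zero, sub_zero, zero_sub, add_zero, zero_add]
    ring
  · -- matrix identity
    have hbb' : b * (starRingEnd ℂ) b = ((nb : ℝ) : ℂ) := hbb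
    have hncC : ((nc : ℝ) : ℂ) = c * (starRingEnd ℂ) c := by
      rw [hncdef, ← Complex.mul_conj]
    have cdiffC : ((lp : ℂ)) - lm = (D : ℂ) := by exact_mod_cast hdiff
    have hbstar : (starRingEnd ℂ) b = -((q : ℂ) * (starRingEnd ℂ) c * (s : ℂ)) := by
      rw [hbdef]; simp [_root_.map_mul]
    have J2 : ((lp : ℂ) - lm) * (K : ℂ) * b = -((q : ℂ) * c * (s : ℂ)) * ((K : ℂ) * (D : ℂ)) := by
      rw [cdiffC, hbdef]; ring
    have J3 : ((lp : ℂ) - lm) * (K : ℂ) * ((starRingEnd ℂ) b)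
        = -((q : ℂ) * (starRingEnd ℂ) c * (s : ℂ)) * ((K : ℂ) * (D : ℂ)) := by
      rw [cdiffC, hbstar]; ring
    have J1 : (lp : ℂ) * (K : ℂ) ^ 2 + (lm : ℂ) * (b * (starRingEnd ℂ) b)
        = ((p : ℂ) - (q : ℂ) * (c * (starRingEnd ℂ) c)) * ((K : ℂ) * (D : ℂ)) := by
      rw [hbb']
      calc ((lp : ℂ)) * (K : ℂ) ^ 2 + (lm : ℂ) * ((nb : ℝ) : ℂ)
          = ((lp * K ^ 2 + lm * nb : ℝ) : ℂ) := by push_cast; ring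
        _ = ((a * (K * D) : ℝ) : ℂ) := by rw [hI1]
        _ = ((p : ℂ) - (q : ℂ) * (c * (starRingEnd ℂ) c)) * ((K : ℂ) * (D : ℂ)) := by
            rw [hadef]; push_cast; rw [hncC]
    have J4 : (lp : ℂ) * (b * (starRingEnd ℂ) b) + (lm : ℂ) * (K : ℂ) ^ 2
        = -((q : ℂ) * (s : ℂ) ^ 2) * ((K : ℂ) * (D : ℂ)) := by
      rw [hbb']
      calc ((lp : ℂ)) * ((nb : ℝ) : ℂ) + (lm : ℂ) * (K : ℂ) ^ 2
          = ((lp * nb + lm * K ^ 2 : ℝ) : ℂ) := by push_cast; ring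
        _ = ((dd * (K * D) : ℝ) : ℂ) := by rw [hI4]
        _ = -((q : ℂ) * (s : ℂ) ^ 2) * ((K : ℂ) * (D : ℂ)) := by
            rw [hdddef]; push_cast; ring
    have hφpt : ∀ i, φ i = c * ψ i + (s : ℂ) * e i := by
      intro i; rw [hφeq]; simp
    have hupt : ∀ i, u i = ((r : ℂ))⁻¹ * ((K : ℂ) * ψ i + (starRingEnd ℂ) b * e i) := by
      intro i; rw [hudef]; simp only [Pi.smul_apply, Pi.add_apply, smul_eq_mul, starRingEnd_apply]
    have hvpt : ∀ i, v i = ((r : ℂ))⁻¹ * (b * ψ i - (K : ℂ) * e i) := by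
      intro i; rw [hvdef]; simp only [Pi.smul_apply, Pi.sub_apply, smul_eq_mul]
    ext i j
    simp only [Matrix.sub_apply, Matrix.add_apply, Matrix.smul_apply, outer,
      Matrix.vecMulVec_apply, Pi.star_apply, smul_eq_mul]
    rw [hφpt i, hφpt j, hupt i, hupt j, hvpt i, hvpt j]
    simp only [star_add, star_sub, star_mul', star_inv₀, Complex.star_def,
      Complex.conj_ofReal, Complex.conj_conj, map_inv₀]
    field_simp
    linear_combination (↑p * (ψ i * (starRingEnd ℂ) (ψ j)) -
        ↑q * ((c * ψ i + ↑s * e i) * ((starRingEnd ℂ) c * (starRingEnd ℂ) (ψ j) + ↑s * (starRingEnd ℂ) (e j)))) * hr2C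
      - (ψ i * (starRingEnd ℂ) (ψ j)) * J1
      - (ψ i * (starRingEnd ℂ) (e j)) * J2
      - (e i * (starRingEnd ℂ) (ψ j)) * J3
      - (e i * (starRingEnd ℂ) (e j)) * J4
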